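/- The elements π(h^k), k ≥ 1, where π : A → A/[A,A] is the quotient map and h = u + v + u⁻¹ + v⁻¹ + u⁻¹v⁻¹, are linearly independent over ℂ in the cyclic space A/[A,A]. -/

import Mathlib

/- STATEMENT 17: The images π(h^k), k ≥ 1, of the powers of
h = u + v + u⁻¹ + v⁻¹ + u⁻¹v⁻¹ in the cyclic space A/[A,A] are linearly
independent over ℂ. -/

noncomputable section

abbrev A : Type := MonoidAlgebra ℂ (FreeGroup Bool)

def u : A := MonoidAlgebra.of ℂ (FreeGroup Bool) (FreeGroup.of false)
def v : A := MonoidAlgebra.of ℂ (FreeGroup Bool) (FreeGroup.of true)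
def ui : A := MonoidAlgebra.of ℂ (FreeGroup Bool) (FreeGroup.of false)⁻¹
def vi : A := MonoidAlgebra.of ℂ (FreeGroup Bool) (FreeGroup.of true)⁻¹

def h : A := u + v + ui + vi + ui * vi

def commSpan : Submodule ℂ A := Submodule.span ℂ {x : A | ∃ a b : A, x = a * b - b * a}

def φ (z : ℂˣ) : A →ₐ[ℂ] ℂ :=
  MonoidAlgebra.lift ℂ ℂ (FreeGroup Bool)
    ((Units.coeHom ℂ).comp (FreeGroup.lift (fun b : Bool => if b then 1 else z)))

lemma φ_h (z : ℂˣ) : φ z h = (z : ℂ) + 2 + 2 * (z : ℂ)⁻¹ := by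
  simp [φ, h, u, v, ui, vi]
  ring

lemma commSpan_le_ker (z : ℂˣ) : commSpan ≤ LinearMap.ker (φ z).toLinearMap := by
  rw [commSpan, Submodule.span_le]
  rintro x ⟨a, b, rfl⟩
  simp [mul_comm]

def ψ (z : ℂˣ) : (A ⧸ commSpan) →ₗ[ℂ] ℂ :=
  commSpan.liftQ (φ z).toLinearMap (commSpan_le_ker z)

lemma exists_unit (t : ℂ) : ∃ z : ℂˣ, φ z h = t := by
  obtain ⟨w, hw⟩ := Complex.exists_root (f := Polynomial.X ^ 2 + Polynomial.C (2 - t) * Polynomial.X + Polynomial.C 2) (by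
    have : (Polynomial.X ^ 2 + Polynomial.C (2 - t) * Polynomial.X + Polynomial.C 2 : Polynomial ℂ).degree = 2 := by
      compute_degree!
    rw [this]; norm_num)
  have hw' : w ^ 2 + (2 - t) * w + 2 = 0 := by simpa [Polynomial.IsRoot] using hw
  have hw0 : w ≠ 0 := by rintro rfl; simp at hw'
  refine ⟨Units.mk0 w hw0, ?_⟩
  rw [φ_h]
  simp only [Units.val_mk0]
  field_simp
  linear_combination hw'

theorem hamiltonians_linearly_independent :
    LinearIndependent ℂ (fun k : ℕ => commSpan.mkQ (h ^ (k + 1))) := by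
  rw [linearIndependent_iff']
  intro s g hsum i hi
  set P : Polynomial ℂ := ∑ j ∈ s, Polynomial.C (g j) * Polynomial.X ^ (j + 1) with hP
  have hPeval : ∀ t : ℂ, P.eval t = 0 := by
    intro t
    obtain ⟨z, hz⟩ := exists_unit t
    have := congrArg (ψ z) hsum
    simp only [map_sum, map_smul, map_zero] at this
    have hψ : ∀ j : ℕ, ψ z (commSpan.mkQ (h ^ (j + 1))) = t ^ (j + 1) := by
      intro j
      have : ψ z (commSpan.mkQ (h ^ (j + 1))) = φ z (h ^ (j + 1)) := by
        simp [ψ, Submodule.liftQ_apply]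
      rw [this, map_pow, hz]
    simp only [hψ] at this
    simpa [hP, Polynomial.eval_finset_sum, smul_eq_mul] using this
  have hP0 : P = 0 := by
    apply Polynomial.funext
    intro t
    simp [hPeval t]
  have : P.coeff (i + 1) = g i := by
    rw [hP, Polynomial.finset_sum_coeff]
    rw [Finset.sum_eq_single i]
    · simp
    · intro j hj hji
      simp only [Polynomial.coeff_C_mul, Polynomial.coeff_X_pow]
      rw [if_neg (by omega)]
      simp
    · intro h; exact absurd hi h
  rw [hP0] at this
  simpa using this.symm
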